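/- For all integers k ≥ 2 and l ≥ 1, one has ẽ⁽ˡ⁾ₖ * τₖ = ẽ⁽ˡ⁻¹⁾ₖ₋₁ * τₖ in ℚ[Sₖ]; explicitly, Σ_{σ∈Sₖ} aₖ^{l, des(σ)+1}·στₖσ⁻¹ = Σ_{α∈Sₖ₋₁} aₖ₋₁^{l−1, des(α)+1}·ατₖα⁻¹, where Sₖ₋₁ ⊆ Sₖ is the subgroup of permutations fixing k. -/

import Mathlib

noncomputable section

/-- Number of descents of a permutation of `Fin n`. -/
def descents {n : ℕ} (σ : Equiv.Perm (Fin n)) : ℕ :=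
  (Finset.univ.filter fun p : Fin n × Fin n =>
    (p.2 : ℕ) = (p.1 : ℕ) + 1 ∧ σ p.2 < σ p.1).card

/-- `aCoeff n l j` is the coefficient of `X^l` in `(1/n!) ∏_{i=1}^n (X - j + i) ∈ ℚ[X]`. -/
def aCoeff (n l j : ℕ) : ℚ :=
  (((n.factorial : ℚ))⁻¹ • ∏ i ∈ Finset.Icc 1 n,
    (Polynomial.X + Polynomial.C ((i : ℚ) - (j : ℚ)))).coeff l

/-- The `k`-cycle `τₖ` sending `1 ↦ k` and `i ↦ i-1` for `2 ≤ i ≤ k`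
(on `Fin k`: `0 ↦ k-1`, `i ↦ i-1`). -/
def tau (k : ℕ) : Equiv.Perm (Fin k) := (finRotate k)⁻¹

/-- The embedding `Sₖ₋₁ ⊆ Sₖ` as the subgroup of permutations fixing the last element. -/
def embPerm (k : ℕ) (α : Equiv.Perm (Fin (k - 1))) : Equiv.Perm (Fin k) :=
  α.viaEmbedding (Fin.castLEEmb (Nat.sub_le k 1))

open Finset Polynomial
open Fin.NatCast Fin.CommRing

lemma aCoeff_eq (n l j : ℕ) :
    aCoeff n l j = ((n.factorial : ℚ))⁻¹ *
      (∏ i ∈ Finset.range n, (X + C ((i : ℚ) + 1 - j))).coeff l := by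
  unfold aCoeff
  rw [Polynomial.coeff_smul, smul_eq_mul]
  congr 2
  rw [← Finset.Ico_add_one_right_eq_Icc, prod_Ico_eq_prod_range]
  exact prod_congr (by simp) fun i _ => by push_cast; ring_nf

lemma keyA (n d l : ℕ) :
    ((d : ℚ) + 1) * aCoeff (n + 1) (l + 1) (d + 1)
      + ((n : ℚ) - d) * aCoeff (n + 1) (l + 1) (d + 2)
      = aCoeff n l (d + 1) := by
  rw [aCoeff_eq, aCoeff_eq, aCoeff_eq]
  push_cast
  set R : ℚ[X] := ∏ i ∈ Finset.range n, (X + C ((i : ℚ) + 1 - ((d : ℚ) + 1))) with hR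
  have h1 : (∏ i ∈ Finset.range (n+1), (X + C ((i : ℚ) + 1 - ((d : ℚ) + 1))))
      = R * (X + C ((n : ℚ) - d)) := by
    rw [prod_range_succ, show (n:ℚ) + 1 - ((d:ℚ) + 1) = (n:ℚ) - (d:ℚ) by ring, hR]
  have h2 : (∏ i ∈ Finset.range (n+1), (X + C ((i : ℚ) + 1 - ((d : ℚ) + 2))))
      = (X - C ((d : ℚ) + 1)) * R := by
    rw [prod_range_succ', hR, mul_comm]
    congr 1
    · push_cast
      rw [show (0:ℚ)+1-((d:ℚ)+2) = -((d:ℚ)+1) by ring, map_neg, ← sub_eq_add_neg]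
    · refine prod_congr rfl fun k _ => ?_
      push_cast
      rw [show ((k:ℚ))+1+1-((d:ℚ)+2) = (k:ℚ)+1-((d:ℚ)+1) by ring]
  rw [h1, h2]
  have hkey : C ((d : ℚ) + 1) * (R * (X + C ((n : ℚ) - d)))
      + C ((n : ℚ) - d) * ((X - C ((d : ℚ) + 1)) * R) = C ((n : ℚ) + 1) * (X * R) := by
    simp only [map_sub, map_add, map_one, map_natCast]
    ring
  have hco := congrArg (fun p : ℚ[X] => p.coeff (l + 1)) hkey
  simp only [coeff_add, coeff_C_mul] at hco
  have hfac : (((n+1).factorial : ℚ))⁻¹ * ((n:ℚ)+1) = ((n.factorial : ℚ))⁻¹ := by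
    rw [Nat.factorial_succ]
    push_cast
    rw [mul_inv]
    field_simp
  calc ((d : ℚ) + 1) * ((((n+1).factorial : ℚ))⁻¹ * (R * (X + C ((n : ℚ) - d))).coeff (l+1))
        + ((n : ℚ) - d) * ((((n+1).factorial : ℚ))⁻¹ * ((X - C ((d : ℚ) + 1)) * R).coeff (l+1))
      = (((n+1).factorial : ℚ))⁻¹ * (((d:ℚ)+1) * (R * (X + C ((n : ℚ) - d))).coeff (l+1)
        + ((n : ℚ) - d) * ((X - C ((d : ℚ) + 1)) * R).coeff (l+1)) := by ring
    _ = (((n+1).factorial : ℚ))⁻¹ * (((n:ℚ)+1) * (X * R).coeff (l+1)) := by rw [hco]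
    _ = ((n.factorial : ℚ))⁻¹ * R.coeff l := by rw [← mul_assoc, hfac, coeff_X_mul]

lemma tau_apply (n : ℕ) (x : Fin (n+2)) : tau (n+2) x = x - 1 := by
  rw [tau, Equiv.Perm.inv_def, Equiv.symm_apply_eq, finRotate_succ_apply, sub_add_cancel]

lemma tau_pow_apply (n m : ℕ) (x : Fin (n+2)) : (tau (n+2) ^ m) x = x - (m : Fin (n+2)) := by
  induction m generalizing x with
  | zero => simp
  | succ m ih =>
    rw [pow_succ, Equiv.Perm.mul_apply, tau_apply, ih]
    push_cast
    ring

lemma embPerm_apply_castLE (n : ℕ) (α : Equiv.Perm (Fin (n+1))) (x : Fin (n+1)) :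
    embPerm (n+2) α (Fin.castLEEmb (Nat.sub_le (n+2) 1) x) =
      Fin.castLEEmb (Nat.sub_le (n+2) 1) (α x) :=
  Equiv.Perm.viaEmbedding_apply α _ x

lemma embPerm_apply_last (n : ℕ) (α : Equiv.Perm (Fin (n+1))) :
    embPerm (n+2) α (Fin.last (n+1)) = Fin.last (n+1) := by
  apply Equiv.Perm.viaEmbedding_apply_of_notMem
  rintro ⟨x, hx⟩
  have hv := congrArg Fin.val hx
  have hlt := x.isLt
  simp only [Fin.castLEEmb_apply, Fin.coe_castLE, Fin.val_last] at hv
  omega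

def Dset (n : ℕ) (α : Equiv.Perm (Fin (n+1))) : Finset (Fin (n+2)) :=
  Finset.univ.filter fun j => embPerm (n+2) α (j + 1) < embPerm (n+2) α j

lemma mem_Dset {n : ℕ} {α : Equiv.Perm (Fin (n+1))} {j : Fin (n+2)} :
    j ∈ Dset n α ↔ embPerm (n+2) α (j+1) < embPerm (n+2) α j := by
  simp [Dset]

lemma last_mem_Dset (n : ℕ) (α : Equiv.Perm (Fin (n+1))) :
    Fin.last (n+1) ∈ Dset n α := by
  rw [mem_Dset, Fin.last_add_one, embPerm_apply_last]
  have h0 : (0 : Fin (n+2)) = Fin.castLEEmb (Nat.sub_le (n+2) 1) (0 : Fin (n+1)) := rfl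
  rw [h0, embPerm_apply_castLE, Fin.lt_iff_val_lt_val]
  simpa using (α 0).isLt

lemma Dset_val_lt {n : ℕ} {α : Equiv.Perm (Fin (n+1))} {b : Fin (n+2)}
    (hb : b ∈ (Dset n α).erase (Fin.last (n+1))) : (b : ℕ) + 1 < n + 1 := by
  obtain ⟨hne, hbD⟩ := Finset.mem_erase.mp hb
  have h1 : (b : ℕ) < n + 1 := Fin.val_lt_last hne
  rcases Nat.lt_or_ge (b : ℕ) n with h | h
  · omega
  · exfalso
    have hbn : (b : ℕ) = n := by omega
    have hb1 : b + 1 = Fin.last (n+1) := by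
      apply Fin.ext
      rw [Fin.val_add_one, if_neg hne, hbn, Fin.val_last]
    rw [mem_Dset, hb1, embPerm_apply_last] at hbD
    exact absurd hbD (not_lt.mpr (Fin.le_last _))

lemma descents_eq_erase_last (n : ℕ) (α : Equiv.Perm (Fin (n+1))) :
    descents α = ((Dset n α).erase (Fin.last (n+1))).card := by
  unfold descents
  refine Finset.card_bij' (fun q _ => Fin.castLEEmb (Nat.sub_le (n+2) 1) q.1)
    (fun b hb => (⟨(b : ℕ), by have := Dset_val_lt hb; omega⟩, ⟨(b : ℕ) + 1, Dset_val_lt hb⟩))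
    ?_ ?_ ?_ ?_
  · rintro ⟨q1, q2⟩ hq
    obtain ⟨-, hval, hlt⟩ := Finset.mem_filter.mp hq
    simp only at hval hlt ⊢
    have hq1ne : Fin.castLEEmb (Nat.sub_le (n+2) 1) q1 ≠ Fin.last (n+1) := by
      intro h
      have := congrArg Fin.val h
      simp only [Fin.castLEEmb_apply, Fin.coe_castLE, Fin.val_last] at this
      omega
    refine Finset.mem_erase.mpr ⟨hq1ne, ?_⟩
    have hsucc : Fin.castLEEmb (Nat.sub_le (n+2) 1) q1 + 1
        = Fin.castLEEmb (Nat.sub_le (n+2) 1) q2 := by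
      apply Fin.ext
      rw [Fin.val_add_one, if_neg hq1ne]
      simp only [Fin.castLEEmb_apply, Fin.coe_castLE]
      omega
    rw [mem_Dset, hsucc, embPerm_apply_castLE, embPerm_apply_castLE,
      Fin.lt_iff_val_lt_val]
    simpa using hlt
  · rintro b hb
    obtain ⟨hne, hbD⟩ := Finset.mem_erase.mp hb
    refine Finset.mem_filter.mpr ⟨Finset.mem_univ _, rfl, ?_⟩
    have hvlt : (b : ℕ) < n + 1 := by have := Dset_val_lt hb; omega
    have he2 : b + 1 = Fin.castLEEmb (Nat.sub_le (n+2) 1)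
        (⟨(b : ℕ) + 1, Dset_val_lt hb⟩ : Fin (n+1)) := by
      apply Fin.ext
      rw [Fin.val_add_one, if_neg hne]
      simp
    have key := mem_Dset.mp hbD
    rw [he2, embPerm_apply_castLE] at key
    have wb : embPerm (n+2) α b = Fin.castLEEmb (Nat.sub_le (n+2) 1)
        (α ⟨(b : ℕ), hvlt⟩) := embPerm_apply_castLE n α ⟨(b : ℕ), hvlt⟩
    rw [wb, Fin.lt_iff_val_lt_val] at key
    simp only [Fin.castLEEmb_apply, Fin.coe_castLE] at key
    exact Fin.lt_iff_val_lt_val.mpr key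
  · rintro ⟨q1, q2⟩ hq
    obtain ⟨-, hval, -⟩ := Finset.mem_filter.mp hq
    simp only at hval
    refine Prod.ext ?_ ?_ <;> apply Fin.ext <;> simp [hval]
  · rintro b hb
    apply Fin.ext; simp

lemma Dset_card (n : ℕ) (α : Equiv.Perm (Fin (n+1))) :
    (Dset n α).card = descents α + 1 := by
  rw [descents_eq_erase_last n α, Finset.card_erase_of_mem (last_mem_Dset n α)]
  have h1 : 1 ≤ (Dset n α).card := Finset.card_pos.mpr ⟨_, last_mem_Dset n α⟩
  omega

lemma descents_mul_tau_pow (n : ℕ) (α : Equiv.Perm (Fin (n+1))) (m : Fin (n+2)) :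
    descents (embPerm (n+2) α * tau (n+2) ^ (m : ℕ)) =
      ((Dset n α).erase (Fin.last (n+1) - m)).card := by
  unfold descents
  have happ : ∀ x : Fin (n+2),
      (embPerm (n+2) α * tau (n+2) ^ (m : ℕ)) x = embPerm (n+2) α (x - m) := by
    intro x
    rw [Equiv.Perm.mul_apply, tau_pow_apply, Fin.cast_val_eq_self]
  refine Finset.card_bij' (fun p _ => p.1 - m) (fun b _ => (b + m, b + m + 1)) ?_ ?_ ?_ ?_
  · rintro ⟨p1, p2⟩ hp
    obtain ⟨-, hval, hlt⟩ := Finset.mem_filter.mp hp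
    simp only at hval hlt ⊢
    have hp1ne : p1 ≠ Fin.last (n+1) := by
      intro h
      have h2 := p2.isLt
      rw [h] at hval
      simp [Fin.val_last] at hval
      omega
    have hp2 : p2 = p1 + 1 := by
      apply Fin.ext
      rw [Fin.val_add_one, if_neg hp1ne, hval]
    refine Finset.mem_erase.mpr ⟨?_, ?_⟩
    · intro h
      apply hp1ne
      have := congrArg (· + m) h
      simpa [sub_add_cancel] using this
    · rw [mem_Dset, show p1 - m + 1 = p2 - m by rw [hp2]; ring]
      rw [happ, happ] at hlt
      exact hlt
  · rintro b hb
    obtain ⟨hne, hbD⟩ := Finset.mem_erase.mp hb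
    have hbm : b + m ≠ Fin.last (n+1) := by
      intro h
      apply hne
      rw [eq_sub_iff_add_eq, h]
    refine Finset.mem_filter.mpr ⟨Finset.mem_univ _, ?_, ?_⟩
    · simp only
      rw [Fin.val_add_one, if_neg hbm]
    · simp only
      rw [happ, happ, show b + m + 1 - m = b + 1 by ring, add_sub_cancel_right]
      exact mem_Dset.mp hbD
  · rintro ⟨p1, p2⟩ hp
    obtain ⟨-, hval, -⟩ := Finset.mem_filter.mp hp
    simp only at hval
    have hp1ne : p1 ≠ Fin.last (n+1) := by
      intro h
      have h2 := p2.isLt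
      rw [h] at hval
      simp [Fin.val_last] at hval
      omega
    refine Prod.ext ?_ ?_
    · simp only
      rw [sub_add_cancel]
    · simp only
      rw [sub_add_cancel]
      apply Fin.ext
      rw [Fin.val_add_one, if_neg hp1ne, hval]
  · rintro b hb
    simp only
    rw [add_sub_cancel_right]

lemma emb_tau_bijective (n : ℕ) :
    Function.Bijective (fun p : Equiv.Perm (Fin (n+1)) × Fin (n+2) =>
      embPerm (n+2) p.1 * tau (n+2) ^ ((p.2 : ℕ))) := by
  rw [Fintype.bijective_iff_injective_and_card]
  constructor
  · rintro ⟨α, m⟩ ⟨β, r⟩ h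
    simp only at h
    have happ := congrArg (fun σ : Equiv.Perm (Fin (n+2)) => σ (Fin.last (n+1) + m)) h
    simp only [Equiv.Perm.mul_apply] at happ
    rw [tau_pow_apply, tau_pow_apply, Fin.cast_val_eq_self, Fin.cast_val_eq_self,
      add_sub_cancel_right, embPerm_apply_last] at happ
    have h2 : Fin.last (n+1) + m - r = Fin.last (n+1) := by
      apply (embPerm (n+2) β).injective
      rw [embPerm_apply_last]
      exact happ.symm
    have hmr : m = r := by
      have h3 := congrArg (· + r) h2
      simp only [sub_add_cancel] at h3
      exact add_left_cancel h3
    subst hmr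
    have hemb : embPerm (n+2) α = embPerm (n+2) β := mul_right_cancel h
    have hab : α = β := by
      apply Equiv.ext
      intro x
      have hx := congrArg (fun σ : Equiv.Perm (Fin (n+2)) =>
        σ (Fin.castLEEmb (Nat.sub_le (n+2) 1) x)) hemb
      simp only [embPerm_apply_castLE] at hx
      exact (Fin.castLEEmb (Nat.sub_le (n+2) 1)).injective hx
    rw [hab]
  · rw [Fintype.card_prod, Fintype.card_perm, Fintype.card_perm,
      Fintype.card_fin, Fintype.card_fin, Nat.factorial_succ (n+1)]
    ring

lemma sum_aCoeff (n l : ℕ) (α : Equiv.Perm (Fin (n+1))) :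
    ∑ m : Fin (n+2), aCoeff (n+2) (l+1) (descents (embPerm (n+2) α * tau (n+2) ^ (m : ℕ)) + 1)
      = aCoeff (n+1) l (descents α + 1) := by
  simp_rw [descents_mul_tau_pow]
  have step1 : (∑ m : Fin (n+2),
        aCoeff (n+2) (l+1) (((Dset n α).erase (Fin.last (n+1) - m)).card + 1))
      = ∑ c : Fin (n+2), aCoeff (n+2) (l+1) (((Dset n α).erase c).card + 1) :=
    Fintype.sum_equiv (Equiv.subLeft (Fin.last (n+1))) _ _ (fun m => by
      rw [Equiv.subLeft_apply])
  rw [step1]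
  set D := Dset n α with hD
  set d := descents α with hd
  have hcard : D.card = d + 1 := Dset_card n α
  rw [← Finset.sum_sdiff (Finset.subset_univ D)]
  have hA : ∀ c ∈ D, aCoeff (n+2) (l+1) ((D.erase c).card + 1)
      = aCoeff (n+2) (l+1) (d+1) := fun c hc => by
    rw [Finset.card_erase_of_mem hc, hcard]
    norm_num
  have hB : ∀ c ∈ Finset.univ \ D, aCoeff (n+2) (l+1) ((D.erase c).card + 1)
      = aCoeff (n+2) (l+1) (d+2) := fun c hc => by
    rw [Finset.erase_eq_of_notMem (Finset.mem_sdiff.mp hc).2, hcard]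
  rw [Finset.sum_congr rfl hA, Finset.sum_congr rfl hB, Finset.sum_const, Finset.sum_const,
    hcard]
  have hdle : d + 1 ≤ n + 2 := by
    have h1 : D.card ≤ (Finset.univ : Finset (Fin (n+2))).card := Finset.card_le_univ D
    rw [hcard, Finset.card_univ, Fintype.card_fin] at h1
    omega
  have hsd : (Finset.univ \ D).card = n + 1 - d := by
    rw [Finset.card_sdiff_of_subset (Finset.subset_univ D), hcard, Finset.card_univ, Fintype.card_fin]
    omega
  rw [hsd, nsmul_eq_mul, nsmul_eq_mul]
  have hk := keyA (n+1) d l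
  have hc1 : ((n + 1 - d : ℕ) : ℚ) = (n : ℚ) + 1 - d := by
    push_cast [Nat.cast_sub (by omega : d ≤ n + 1)]
    ring
  rw [hc1]
  push_cast at hk ⊢
  linarith [hk]

theorem eulerian_conj_tau_restrict (k l : ℕ) (hk : 2 ≤ k) (hl : 1 ≤ l) :
    ∑ σ : Equiv.Perm (Fin k),
        MonoidAlgebra.single (σ * tau k * σ⁻¹) (aCoeff k l (descents σ + 1)) =
    ∑ α : Equiv.Perm (Fin (k - 1)),
        MonoidAlgebra.single (embPerm k α * tau k * (embPerm k α)⁻¹)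
          (aCoeff (k - 1) (l - 1) (descents α + 1)) := by
  obtain ⟨n, rfl⟩ : ∃ n, k = n + 2 := ⟨k - 2, by omega⟩
  obtain ⟨l', rfl⟩ : ∃ l'', l = l'' + 1 := ⟨l - 1, by omega⟩
  rw [← Fintype.sum_bijective _ (emb_tau_bijective n)
      (fun p : Equiv.Perm (Fin (n+1)) × Fin (n+2) =>
        MonoidAlgebra.single
          ((embPerm (n+2) p.1 * tau (n+2) ^ ((p.2 : ℕ))) * tau (n+2)
            * (embPerm (n+2) p.1 * tau (n+2) ^ ((p.2 : ℕ)))⁻¹)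
          (aCoeff (n+2) (l'+1)
            (descents (embPerm (n+2) p.1 * tau (n+2) ^ ((p.2 : ℕ))) + 1)))
      _ (fun p => rfl)]
  rw [Fintype.sum_prod_type]
  show _ = ∑ α : Equiv.Perm (Fin (n+1)),
      MonoidAlgebra.single (embPerm (n+2) α * tau (n+2) * (embPerm (n+2) α)⁻¹)
        (aCoeff (n+1) l' (descents α + 1))
  refine Finset.sum_congr rfl fun α _ => ?_
  have hconj : ∀ m : Fin (n+2),
      (embPerm (n+2) α * tau (n+2) ^ (m : ℕ)) * tau (n+2)
        * (embPerm (n+2) α * tau (n+2) ^ (m : ℕ))⁻¹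
      = embPerm (n+2) α * tau (n+2) * (embPerm (n+2) α)⁻¹ := fun m => by group
  simp_rw [hconj]
  rw [show ∀ (s : Finset (Fin (n+2))) (f : Fin (n+2) → ℚ) g, ∑ x ∈ s, MonoidAlgebra.single g (f x) = MonoidAlgebra.single g (∑ x ∈ s, f x) from fun s f g => (map_sum (MonoidAlgebra.singleAddHom g) f s).symm]
  rw [sum_aCoeff n l' α]
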